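/- Let X_{r:n} be the r-th order statistic from an i.i.d. sample of size n with cdf F, density f, and quantile function F^{−1}. Then VJ^w(X_{r:n}) = [B(3r−2, 3(n−r)+1)/(4 B(r,n−r+1)³)]·E[(F^{−1}(V₁))² f(F^{−1}(V₁))²] − [B(2r−1, 2(n−r)+1)²/(4 B(r,n−r+1)⁴)]·E[F^{−1}(V₂) f(F^{−1}(V₂))]², where V₁ ∼ Beta(3r−2, 3(n−r)+1) and V₂ ∼ Beta(2r−1, 2(n−r)+1), assuming r ≥ 1 and the relevant Beta parameters are positive. -/
import Mathlib


open MeasureTheory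

/-- Beta function `B(p,q) = Γ(p)Γ(q)/Γ(p+q)` (for natural arguments). -/
noncomputable def betaFun (p q : ℕ) : ℝ :=
  Real.Gamma (p : ℝ) * Real.Gamma (q : ℝ) / Real.Gamma ((p : ℝ) + (q : ℝ))

/-- Density of the `Beta(p,q)` distribution on `(0,1)`. -/
noncomputable def betaPdf (p q : ℕ) (u : ℝ) : ℝ :=
  (1 / betaFun p q) * u ^ (p - 1) * (1 - u) ^ (q - 1)

/-- Density of the `r`-th order statistic of a sample of size `n`. -/
noncomputable def osDensity (n r : ℕ) (F f : ℝ → ℝ) (x : ℝ) : ℝ :=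
  (1 / betaFun r (n - r + 1)) * (F x) ^ (r - 1) * (1 - F x) ^ (n - r) * f x

lemma betaFun_pos (p q : ℕ) (hp : 1 ≤ p) (hq : 1 ≤ q) : 0 < betaFun p q := by
  have h1 : (0:ℝ) < p := by exact_mod_cast hp
  have h2 : (0:ℝ) < q := by exact_mod_cast hq
  have := Real.Gamma_pos_of_pos h1
  have := Real.Gamma_pos_of_pos h2
  have := Real.Gamma_pos_of_pos (add_pos h1 h2)
  unfold betaFun
  positivity

/-- Change of variables `u = F x`. -/
lemma cov_lemma (f F : ℝ → ℝ) (Finv : ℝ → ℝ)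
    (hf0 : ∀ x, 0 ≤ f x)
    (hderiv : ∀ x, HasDerivAt F (f x) x)
    (hrange : ∀ x, F x ∈ Set.Ioo (0:ℝ) 1)
    (hFinv : ∀ u ∈ Set.Ioo (0:ℝ) 1, F (Finv u) = u)
    (hFinvF : ∀ x, Finv (F x) = x) (g : ℝ → ℝ) :
    ∫ u in Set.Ioo (0:ℝ) 1, g u = ∫ x : ℝ, g (F x) * f x := by
  have hinj : Function.Injective F := by
    intro a b h
    have := congrArg Finv h
    rwa [hFinvF, hFinvF] at this
  have himg : F '' Set.univ = Set.Ioo (0:ℝ) 1 := by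
    ext u
    constructor
    · rintro ⟨x, -, rfl⟩; exact hrange x
    · intro hu; exact ⟨Finv u, trivial, hFinv u hu⟩
  have key := MeasureTheory.integral_image_eq_integral_abs_deriv_smul
    MeasurableSet.univ (fun x _ => (hderiv x).hasDerivWithinAt) hinj.injOn g
  rw [himg] at key
  rw [key, MeasureTheory.Measure.restrict_univ]
  congr 1
  ext x
  rw [abs_of_nonneg (hf0 x), smul_eq_mul, mul_comm]

/-- Weighted varextropy of the `r`-th order statistic, expressed via Beta
distributed random variables `V₁ ∼ Beta(3r−2, 3(n−r)+1)` and
`V₂ ∼ Beta(2r−1, 2(n−r)+1)` through the quantile function `F⁻¹`. -/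
theorem weighted_varextropy_orderStat_beta_repr
    (n r : ℕ) (hr : 1 ≤ r) (hrn : r ≤ n)
    (f F Finv : ℝ → ℝ)
    (hf0 : ∀ x, 0 ≤ f x) (hmeas : Measurable f)
    (hderiv : ∀ x, HasDerivAt F (f x) x)
    (hrange : ∀ x, F x ∈ Set.Ioo (0:ℝ) 1)
    (hFinv : ∀ u ∈ Set.Ioo (0:ℝ) 1, F (Finv u) = u)
    (hFinvF : ∀ x, Finv (F x) = x) :
    (1/4 : ℝ) * (∫ x : ℝ, x^2 * (osDensity n r F f x)^3)
      - ((1/2 : ℝ) * ∫ x : ℝ, x * (osDensity n r F f x)^2)^2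
    = (betaFun (3*r - 2) (3*(n - r) + 1) / (4 * (betaFun r (n - r + 1))^3)) *
        (∫ u in Set.Ioo (0:ℝ) 1,
          ((Finv u)^2 * (f (Finv u))^2) * betaPdf (3*r - 2) (3*(n - r) + 1) u)
      - ((betaFun (2*r - 1) (2*(n - r) + 1))^2 / (4 * (betaFun r (n - r + 1))^4)) *
          (∫ u in Set.Ioo (0:ℝ) 1,
            (Finv u * f (Finv u)) * betaPdf (2*r - 1) (2*(n - r) + 1) u)^2 := by
  set B := betaFun r (n - r + 1) with hBdef
  set B3 := betaFun (3*r - 2) (3*(n - r) + 1) with hB3def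
  set B2 := betaFun (2*r - 1) (2*(n - r) + 1) with hB2def
  have hB : 0 < B := betaFun_pos _ _ hr (by omega)
  have hB3 : 0 < B3 := betaFun_pos _ _ (by omega) (by omega)
  have hB2 : 0 < B2 := betaFun_pos _ _ (by omega) (by omega)
  have cov := cov_lemma f F Finv hf0 hderiv hrange hFinv hFinvF
  -- index arithmetic
  have e3 : 3*r - 2 - 1 = 3*(r-1) := by omega
  have e3' : (r-1)*3 = 3*(r-1) := by omega
  have e3q : 3*(n-r) + 1 - 1 = 3*(n-r) := by omega
  have e3q' : (n-r)*3 = 3*(n-r) := by omega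
  have e2 : 2*r - 1 - 1 = 2*(r-1) := by omega
  have e2' : (r-1)*2 = 2*(r-1) := by omega
  have e2q : 2*(n-r) + 1 - 1 = 2*(n-r) := by omega
  have e2q' : (n-r)*2 = 2*(n-r) := by omega
  -- the two basic integrals
  set I1 : ℝ := ∫ x : ℝ, x^2 * (F x)^(3*(r-1)) * (1 - F x)^(3*(n-r)) * (f x)^3 with hI1
  set I2 : ℝ := ∫ x : ℝ, x * (F x)^(2*(r-1)) * (1 - F x)^(2*(n-r)) * (f x)^2 with hI2
  have hL1 : (∫ x : ℝ, x^2 * (osDensity n r F f x)^3) = (1/B)^3 * I1 := by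
    rw [hI1, ← MeasureTheory.integral_const_mul]
    congr 1; ext x
    simp only [osDensity, ← hBdef, mul_pow, ← pow_mul, e3', e3q']
    ring
  have hL2 : (∫ x : ℝ, x * (osDensity n r F f x)^2) = (1/B)^2 * I2 := by
    rw [hI2, ← MeasureTheory.integral_const_mul]
    congr 1; ext x
    simp only [osDensity, ← hBdef, mul_pow, ← pow_mul, e2', e2q']
    ring
  have hR1 : (∫ u in Set.Ioo (0:ℝ) 1,
      ((Finv u)^2 * (f (Finv u))^2) * betaPdf (3*r - 2) (3*(n - r) + 1) u)
      = (1/B3) * I1 := by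
    rw [cov, hI1, ← MeasureTheory.integral_const_mul]
    congr 1; ext x
    simp only [betaPdf, ← hB3def, hFinvF, e3, e3q]
    ring
  have hR2 : (∫ u in Set.Ioo (0:ℝ) 1,
      (Finv u * f (Finv u)) * betaPdf (2*r - 1) (2*(n - r) + 1) u)
      = (1/B2) * I2 := by
    rw [cov, hI2, ← MeasureTheory.integral_const_mul]
    congr 1; ext x
    simp only [betaPdf, ← hB2def, hFinvF, e2, e2q]
    ring
  rw [hL1, hL2, hR1, hR2]
  field_simp
  ring
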